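/- Every θ-metric space is metrizable: if (X, d, θ) is a θ-metric space, then the topology generated by the d-balls coincides with the topology of some metric on X. -/

import Mathlib

open Filter Set TopologicalSpace Topology Uniformity

private lemma gen_eq_aux {X : Type*} (t : TopologicalSpace X) (e : X → X → ℝ)
    (hrefl : ∀ x, e x x = 0)
    (hopen : ∀ x r, 0 < r → IsOpen[t] {y | e x y < r})
    (hnbhd : ∀ s, IsOpen[t] s → ∀ x ∈ s, ∃ r > 0, {y | e x y < r} ⊆ s) :
    TopologicalSpace.generateFrom {B : Set X | ∃ x r, 0 < r ∧ B = {y | e x y < r}} = t := by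
  refine le_antisymm ?_ (le_generateFrom ?_)
  · rw [TopologicalSpace.le_def]
    intro s hs
    choose r hrpos hsub using hnbhd s hs
    have hseq : s = ⋃ x, ⋃ hx : x ∈ s, {y | e x y < r x hx} := by
      ext y
      simp only [Set.mem_iUnion]
      constructor
      · intro hy
        exact ⟨y, hy, by simpa [hrefl y] using hrpos y hy⟩
      · rintro ⟨x, hx, hy⟩
        exact hsub x hx hy
    rw [hseq]
    letI tg : TopologicalSpace X :=
      TopologicalSpace.generateFrom {B : Set X | ∃ x r, 0 < r ∧ B = {y | e x y < r}}
    exact isOpen_iUnion fun x => isOpen_iUnion fun hx =>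
      isOpen_generateFrom_of_mem ⟨x, r x hx, hrpos x hx, rfl⟩
  · rintro B ⟨x, rr, hrr, rfl⟩
    exact hopen x rr hrr

theorem thetaMetric_metrizable {X : Type*} [Nonempty X] (θ : ℝ → ℝ → ℝ)
    (hc1 : ∀ t ≥ (0:ℝ), ContinuousOn (fun s => θ s t) (Set.Ici 0))
    (hc2 : ∀ s ≥ (0:ℝ), ContinuousOn (fun t => θ s t) (Set.Ici 0))
    (hnn : ∀ s t, 0 ≤ s → 0 ≤ t → 0 ≤ θ s t)
    (h00 : θ 0 0 = 0)
    (hsymm : ∀ s t, 0 ≤ s → 0 ≤ t → θ s t = θ t s)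
    (hmono : ∀ x y s t, 0 ≤ x → 0 ≤ y → 0 ≤ s → 0 ≤ t →
      ((x ≤ s ∧ y < t) ∨ (x < s ∧ y ≤ t)) → θ x y < θ s t)
    (hsur : ∀ m, (∃ s t, 0 ≤ s ∧ 0 ≤ t ∧ θ s t = m) →
      ∀ t, 0 ≤ t → t ≤ m → ∃ s, 0 ≤ s ∧ s ≤ m ∧ θ s t = m)
    (hle : ∀ s > (0:ℝ), θ s 0 ≤ s)
    (d : X → X → ℝ)
    (hdnn : ∀ x y, 0 ≤ d x y)
    (hd0 : ∀ x y, d x y = 0 ↔ x = y)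
    (hdsymm : ∀ x y, d x y = d y x)
    (hdtri : ∀ x y z, d x z ≤ θ (d x y) (d y z)) :
    ∃ ρ : X → X → ℝ,
      (∀ x y, 0 ≤ ρ x y) ∧
      (∀ x y, ρ x y = 0 ↔ x = y) ∧
      (∀ x y, ρ x y = ρ y x) ∧
      (∀ x y z, ρ x z ≤ ρ x y + ρ y z) ∧
      TopologicalSpace.generateFrom {B : Set X | ∃ x r, 0 < r ∧ B = {y | d x y < r}}
        = TopologicalSpace.generateFrom {B : Set X | ∃ x r, 0 < r ∧ B = {y | ρ x y < r}} := by
  have hdd : ∀ x, d x x = 0 := fun x => (hd0 x x).2 rfl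
  -- weak monotonicity
  have wmono : ∀ a b s t : ℝ, 0 ≤ a → 0 ≤ b → 0 ≤ s → 0 ≤ t → a ≤ s → b ≤ t →
      θ a b ≤ θ s t := by
    intro a b s t ha hb hs ht has hbt
    rcases eq_or_lt_of_le has with rfl | hlt
    · rcases eq_or_lt_of_le hbt with rfl | hlt'
      · exact le_rfl
      · exact (hmono a b a t ha hb hs ht (Or.inl ⟨le_rfl, hlt'⟩)).le
    · exact (hmono a b s t ha hb hs ht (Or.inr ⟨hlt, hbt⟩)).le
  -- key continuity consequence
  have key : ∀ a r : ℝ, 0 ≤ a → a < r → ∃ ε > 0, ∀ t, 0 ≤ t → t < ε → θ a t < r := by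
    intro a r ha har
    have ha0 : θ a 0 < r := by
      rcases eq_or_lt_of_le ha with rfl | ha'
      · simpa [h00] using har
      · exact lt_of_le_of_lt (hle a ha') har
    have hev : {t : ℝ | θ a t < r} ∈ 𝓝[Set.Ici (0:ℝ)] 0 :=
      (hc2 a ha 0 Set.self_mem_Ici) (Iio_mem_nhds ha0)
    rw [Metric.mem_nhdsWithin_iff] at hev
    obtain ⟨ε, hε, hsub⟩ := hev
    refine ⟨ε, hε, fun t ht htε => hsub ⟨?_, ht⟩⟩
    simp only [Metric.mem_ball, Real.dist_eq, sub_zero, abs_of_nonneg ht]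
    exact htε
  -- "half" property
  have half : ∀ ε : ℝ, 0 < ε → ∃ δ > 0, ∀ a b : ℝ, 0 ≤ a → 0 ≤ b → a < δ → b < δ →
      θ a b < ε := by
    intro ε hε
    obtain ⟨η, hη, hηε⟩ := key (ε/2) ε (by positivity) (by linarith)
    refine ⟨min (ε/2) (η/2), by positivity, fun a b ha hb haδ hbδ => ?_⟩
    have h1 : a ≤ ε/2 := le_of_lt (lt_of_lt_of_le haδ (min_le_left _ _))
    have h2 : b ≤ η/2 := le_of_lt (lt_of_lt_of_le hbδ (min_le_right _ _))
    calc θ a b ≤ θ (ε/2) (η/2) :=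
          wmono a b (ε/2) (η/2) ha hb (by positivity) (by positivity) h1 h2
      _ < ε := hηε (η/2) (by positivity) (by linarith)
  -- the uniformity filter
  set F : Filter (X × X) := ⨅ r > (0:ℝ), 𝓟 {p : X × X | d p.1 p.2 < r} with hF
  have hB : F.HasBasis ((0:ℝ) < ·) (fun ε => {p : X × X | d p.1 p.2 < ε}) := by
    refine hasBasis_biInf_principal'
      (fun ε₁ h₁ ε₂ h₂ => ⟨min ε₁ ε₂, lt_min h₁ h₂, ?_, ?_⟩) ⟨1, one_pos⟩
    · intro x hx
      simp only [Set.mem_setOf_eq] at hx ⊢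
      exact lt_of_lt_of_le hx (min_le_left _ _)
    · intro x hx
      simp only [Set.mem_setOf_eq] at hx ⊢
      exact lt_of_lt_of_le hx (min_le_right _ _)
  letI U : UniformSpace X := .ofCore
    { uniformity := F
      refl := le_iInf₂ fun r hr => principal_mono.2 <| SetRel.id_subset_iff.2 ⟨fun x => by
        simp [hdd x, hr]⟩
      symm := by
        rw [hF]
        exact tendsto_iInf_iInf fun r => tendsto_iInf_iInf fun _ =>
          tendsto_principal_principal.2 fun x hx => by
            simpa only [Prod.fst_swap, Prod.snd_swap, Set.mem_setOf_eq, hdsymm] using hx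
      comp := le_iInf₂ fun r hr => by
        obtain ⟨δ, hδ, hδr⟩ := half r hr
        refine le_principal_iff.2 <| mem_of_superset
          (mem_lift' <| mem_iInf_of_mem δ <| mem_iInf_of_mem hδ <| mem_principal_self _) ?_
        rintro ⟨x, z⟩ ⟨y, h₁, h₂⟩
        exact lt_of_le_of_lt (hdtri x y z)
          (hδr _ _ (hdnn x y) (hdnn y z) h₁ h₂) }
  have hUF : 𝓤 X = F := rfl
  have hnhds : ∀ x : X, (𝓝 x).HasBasis ((0:ℝ) < ·) (fun ε => {y | d x y < ε}) := by
    intro x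
    rw [nhds_eq_comap_uniformity, hUF]
    exact hB.comap (Prod.mk x)
  -- balls are open
  have hballopen : ∀ (x : X) (r : ℝ), 0 < r → IsOpen {y | d x y < r} := by
    intro x r hr
    rw [isOpen_iff_mem_nhds]
    intro y hy
    obtain ⟨ε, hε, hsub⟩ := key (d x y) r (hdnn x y) hy
    refine (hnhds y).mem_iff.2 ⟨ε, hε, fun z hz => ?_⟩
    exact lt_of_le_of_lt (hdtri x y z) (hsub (d y z) (hdnn y z) hz)
  -- T0
  haveI : T0Space X := by
    refine ⟨fun {x y} hins => ?_⟩
    by_contra hxy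
    have hpos : 0 < d x y := lt_of_le_of_ne (hdnn x y) (fun h => hxy ((hd0 x y).1 h.symm))
    have hx : x ∈ {z | d x z < d x y} := by simp [hdd x, hpos]
    have hy : y ∉ {z | d x z < d x y} := by simp
    exact hy ((hins.mem_open_iff (hballopen x (d x y) hpos)).1 hx)
  -- countably generated uniformity
  haveI : (𝓤 X).IsCountablyGenerated := by
    rw [hUF]
    have : F.HasBasis (fun _ : ℕ => True)
        (fun n => {p : X × X | d p.1 p.2 < 1 / (n + 1)}) := by
      refine hB.to_hasBasis (fun ε hε => ?_) (fun n _ => ?_)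
      · obtain ⟨n, hn⟩ := exists_nat_one_div_lt hε
        exact ⟨n, trivial, fun p hp => lt_trans hp hn⟩
      · exact ⟨1 / (n + 1), by positivity, fun p hp => hp⟩
    exact this.isCountablyGenerated
  haveI : MetrizableSpace X := UniformSpace.metrizableSpace
  obtain ⟨m, hm⟩ : ∃ m : MetricSpace X, m.toUniformSpace.toTopologicalSpace = U.toTopologicalSpace :=
    ⟨TopologicalSpace.metrizableSpaceMetric X, rfl⟩
  refine ⟨fun x y => @dist X m.toDist x y,
    fun x y => @dist_nonneg X m.toPseudoMetricSpace x y,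
    fun x y => @dist_eq_zero X m x y,
    fun x y => @dist_comm X m.toPseudoMetricSpace x y,
    fun x y z => @dist_triangle X m.toPseudoMetricSpace x y z, ?_⟩
  have h1 : TopologicalSpace.generateFrom {B : Set X | ∃ x r, 0 < r ∧ B = {y | d x y < r}}
      = U.toTopologicalSpace := by
    refine gen_eq_aux _ d hdd hballopen ?_
    intro s hs x hx
    obtain ⟨ε, hε, hsub⟩ := (hnhds x).mem_iff.1 (hs.mem_nhds hx)
    exact ⟨ε, hε, hsub⟩
  have h2 : TopologicalSpace.generateFrom
      {B : Set X | ∃ x r, 0 < r ∧ B = {y | @dist X m.toDist x y < r}}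
      = U.toTopologicalSpace := by
    refine gen_eq_aux _ _ (fun x => @dist_self X m.toPseudoMetricSpace x) ?_ ?_
    · intro x r hr
      have : {y | @dist X m.toDist x y < r} = @Metric.ball X m.toPseudoMetricSpace x r := by
        ext y
        simp [Metric.mem_ball, @dist_comm X m.toPseudoMetricSpace x y]
      rw [this, ← hm]
      exact @Metric.isOpen_ball X m.toPseudoMetricSpace x r
    · intro s hs x hx
      rw [← hm] at hs
      obtain ⟨ε, hε, hsub⟩ := (@Metric.isOpen_iff X m.toPseudoMetricSpace s).1 hs x hx
      refine ⟨ε, hε, fun y hy => hsub ?_⟩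
      rw [Metric.mem_ball, @dist_comm X m.toPseudoMetricSpace y x]
      exact hy
  rw [h1, h2]
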